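/- Let A be a unital C*-algebra, and let P : A → A be a faithful projection (P² = P) which is a Schwarz map. Then the range of P is a C*-subalgebra of A. -/

import Mathlib

open Complex in
private lemma polar_aux {A : Type*} [NonUnitalRing A] [StarRing A] [Module ℂ A]
    [StarModule ℂ A] [IsScalarTower ℂ A A] [SMulCommClass ℂ A A] (x y : A) :
    (4:ℂ) • (star y * x) =
      (star (x + (1:ℂ) • y) * (x + (1:ℂ) • y))
      + I • (star (x + I • y) * (x + I • y))
      - (star (x + (-1:ℂ) • y) * (x + (-1:ℂ) • y))
      - I • (star (x + (-I) • y) * (x + (-I) • y)) := by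
  simp only [star_add, star_smul, mul_add, add_mul, smul_mul_assoc, mul_smul_comm, smul_smul,
    smul_add, smul_sub, one_smul]
  match_scalars <;> (simp [Complex.star_def, Complex.conj_I, Complex.ext_iff, Complex.mul_re,
    Complex.mul_im]; try norm_num)

/-- Let `A` be a unital C*-algebra and `P : A → A` a faithful linear
projection which is a Schwarz map.  Then the range of `P` is a C*-subalgebra of `A`,
i.e. a closed (non-unital) star subalgebra. -/
theorem range_of_faithful_schwarz_projection_is_cstar_subalgebra
    {A : Type*} [NormedRing A] [StarRing A] [CStarRing A] [NormedAlgebra ℂ A]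
    [StarModule ℂ A] [PartialOrder A] [StarOrderedRing A] [NormOneClass A]
    [CompleteSpace A]
    (P : A →ₗ[ℂ] A)
    (hproj : ∀ x, P (P x) = P x)
    (hfaithful : ∀ x : A, 0 ≤ x → P x = 0 → x = 0)
    (hschwarz : ∀ x : A, star (P x) * P x ≤ P (star x * x)) :
    ∃ S : NonUnitalStarSubalgebra ℂ A,
      (S : Set A) = Set.range ⇑P ∧ IsClosed (S : Set A) := by
  letI : CStarAlgebra A := { }
  have h4 : (4:ℂ) ≠ 0 := by norm_num
  -- P is a positive map
  have hpos : ∀ a : A, 0 ≤ a → 0 ≤ P a := by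
    intro a ha
    rw [StarOrderedRing.nonneg_iff] at ha
    induction ha using AddSubmonoid.closure_induction with
    | mem z hz =>
      obtain ⟨s, rfl⟩ := hz
      exact le_trans (star_mul_self_nonneg _) (hschwarz s)
    | zero => simp
    | add z w _ _ hz hw => rw [map_add]; exact add_nonneg hz hw
  -- P is monotone
  have hmono : ∀ u v : A, u ≤ v → P u ≤ P v := by
    intro u v huv
    have := hpos _ (sub_nonneg.mpr huv)
    rw [map_sub] at this
    exact sub_nonneg.mp this
  -- fixed points are preserved under `star y * y`
  have hfix : ∀ y : A, P y = y → P (star y * y) = star y * y := by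
    intro y hy
    have h1 : star y * y ≤ P (star y * y) := by
      have := hschwarz y; rwa [hy] at this
    have h2 : 0 ≤ P (star y * y) - star y * y := sub_nonneg.mpr h1
    have h3 : P (P (star y * y) - star y * y) = 0 := by
      rw [map_sub, hproj, sub_self]
    exact (sub_eq_zero.mp (hfaithful _ h2 h3))
  -- self-adjointness of P (star z * z)
  have hsa : ∀ z : A, star (P (star z * z)) = P (star z * z) := by
    intro z
    exact (IsSelfAdjoint.of_nonneg (hpos _ (star_mul_self_nonneg z))).star_eq
  have hss : ∀ w : A, star (star w * w) = star w * w := by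
    intro w; rw [star_mul, star_star]
  have hs4 : ∀ v : A, star ((4:ℂ) • v) = (4:ℂ) • star v := by
    intro v; rw [star_smul]
    congr 1
    simp [Complex.star_def]
  have mid : ∀ a b c d : A,
      P (star (star a * a + Complex.I • (star b * b) - star c * c - Complex.I • (star d * d)))
      = star (P (star a * a + Complex.I • (star b * b) - star c * c
          - Complex.I • (star d * d))) := by
    intro a b c d
    simp only [star_add, star_sub, star_smul, map_add, map_sub, map_smul, map_neg, hss, hsa,
      Complex.star_def, Complex.conj_I, neg_smul, neg_neg]
  -- P commutes with star
  have hPstar : ∀ x : A, P (star x) = star (P x) := by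
    intro x
    have key := polar_aux x (1 : A)
    rw [star_one, one_mul] at key
    apply smul_right_injective A h4
    show (4:ℂ) • P (star x) = (4:ℂ) • star (P x)
    calc (4:ℂ) • P (star x) = P (star ((4:ℂ) • x)) := by rw [hs4, map_smul]
      _ = star (P ((4:ℂ) • x)) := by rw [key]; exact mid _ _ _ _
      _ = (4:ℂ) • star (P x) := by rw [map_smul, hs4]
  -- fixed points are closed under `star y * z`
  have hmul : ∀ y z : A, P y = y → P z = z → P (star y * z) = star y * z := by
    intro y z hy hz
    have key := polar_aux z y
    have pfix : ∀ c : ℂ,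
        P (star (z + c • y) * (z + c • y)) = star (z + c • y) * (z + c • y) := by
      intro c
      apply hfix
      rw [map_add, map_smul, hy, hz]
    have : P ((4:ℂ) • (star y * z)) = (4:ℂ) • (star y * z) := by
      rw [key]
      simp only [map_sub, map_add, map_smul, pfix]
    rw [map_smul] at this
    exact smul_right_injective A h4 this
  -- the fixed-point set as a non-unital star subalgebra
  refine ⟨{ carrier := {x : A | P x = x}
            add_mem' := by
              intro a b ha hb; simp only [Set.mem_setOf_eq] at *; rw [map_add, ha, hb]
            zero_mem' := by simp
            mul_mem' := by
              intro a b ha hb; simp only [Set.mem_setOf_eq] at *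
              have hsa' : P (star a) = star a := by rw [hPstar, ha]
              have := hmul (star a) b hsa' hb
              rwa [star_star] at this
            smul_mem' := by
              intro c a ha; simp only [Set.mem_setOf_eq] at *; rw [map_smul, ha]
            star_mem' := by
              intro a ha; simp only [Set.mem_setOf_eq] at *; rw [hPstar, ha] }, ?_, ?_⟩
  · ext x
    constructor
    · intro hx
      exact ⟨x, hx⟩
    · rintro ⟨y, rfl⟩
      exact hproj y
  · -- closedness: P is bounded, so the fixed-point set is closed
    have hbound_sa : ∀ a : A, IsSelfAdjoint a → ‖P a‖ ≤ 3 * ‖P 1‖ * ‖a‖ := by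
      intro a ha
      have h1 : a ≤ algebraMap ℝ A ‖a‖ := ha.le_algebraMap_norm_self
      have h2 : -(algebraMap ℝ A ‖a‖) ≤ a := ha.neg_algebraMap_norm_le_self
      have halg : algebraMap ℝ A ‖a‖ = (‖a‖ : ℝ) • (1 : A) := Algebra.algebraMap_eq_smul_one _
      have hP1 : P (algebraMap ℝ A ‖a‖) = ‖a‖ • P 1 := by
        rw [halg, LinearMap.map_smul_of_tower]
      have hnn0 : 0 ≤ a + algebraMap ℝ A ‖a‖ := by
        have := add_le_add_left h2 (algebraMap ℝ A ‖a‖)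
        simpa using this
      have hnn : 0 ≤ P (a + algebraMap ℝ A ‖a‖) := hpos _ hnn0
      have hub : P (a + algebraMap ℝ A ‖a‖) ≤ P ((2 : ℝ) • (algebraMap ℝ A ‖a‖)) := by
        apply hmono
        have h2smul : (2 : ℝ) • (algebraMap ℝ A ‖a‖)
            = algebraMap ℝ A ‖a‖ + algebraMap ℝ A ‖a‖ := two_smul _ _
        rw [h2smul]
        exact add_le_add_left h1 _
      have hnorm1 : ‖P (a + algebraMap ℝ A ‖a‖)‖ ≤ ‖P ((2 : ℝ) • (algebraMap ℝ A ‖a‖))‖ :=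
        CStarAlgebra.norm_le_norm_of_nonneg_of_le hnn hub
      have hn2 : ‖P ((2 : ℝ) • (algebraMap ℝ A ‖a‖))‖ = 2 * ‖a‖ * ‖P 1‖ := by
        rw [LinearMap.map_smul_of_tower, hP1, smul_smul, norm_smul, Real.norm_eq_abs,
          abs_of_nonneg (by positivity)]
      have hsplit : P a = P (a + algebraMap ℝ A ‖a‖) - ‖a‖ • P 1 := by
        rw [map_add, hP1]; abel
      calc ‖P a‖ = ‖P (a + algebraMap ℝ A ‖a‖) - ‖a‖ • P 1‖ := by rw [← hsplit]
        _ ≤ ‖P (a + algebraMap ℝ A ‖a‖)‖ + ‖‖a‖ • P 1‖ := norm_sub_le _ _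
        _ ≤ 2 * ‖a‖ * ‖P 1‖ + ‖a‖ * ‖P 1‖ := by
            gcongr
            · exact hnorm1.trans hn2.le
            · rw [norm_smul, Real.norm_eq_abs, abs_of_nonneg (norm_nonneg a)]
        _ = 3 * ‖P 1‖ * ‖a‖ := by ring
    have hdecomp : ∀ x : A, ∃ a b : A, IsSelfAdjoint a ∧ IsSelfAdjoint b ∧
        x = a + Complex.I • b ∧ ‖a‖ ≤ ‖x‖ ∧ ‖b‖ ≤ ‖x‖ := by
      intro x
      refine ⟨(2:ℂ)⁻¹ • (x + star x), (-(Complex.I)/2) • (x - star x), ?_, ?_, ?_, ?_, ?_⟩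
      · rw [IsSelfAdjoint, star_smul, star_add, star_star]
        rw [show star ((2:ℂ)⁻¹) = (2:ℂ)⁻¹ by simp [Complex.star_def]]
        rw [add_comm]
      · rw [IsSelfAdjoint, star_smul, star_sub, star_star]
        rw [show star ((-(Complex.I))/2 : ℂ) = Complex.I/2 by
          simp [Complex.star_def, map_div₀, Complex.conj_I]]
        module
      · rw [smul_smul]
        match_scalars <;> simp [Complex.ext_iff, Complex.mul_re, Complex.mul_im] <;> norm_num
      · calc ‖(2:ℂ)⁻¹ • (x + star x)‖ = ‖((2:ℂ)⁻¹)‖ * ‖x + star x‖ := norm_smul _ _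
          _ ≤ (1/2) * (‖x‖ + ‖star x‖) := by
              gcongr
              · simp
              · exact norm_add_le _ _
          _ = ‖x‖ := by rw [norm_star]; ring
      · calc ‖(-(Complex.I)/2) • (x - star x)‖
            = ‖((-(Complex.I)/2 : ℂ))‖ * ‖x - star x‖ := norm_smul _ _
          _ ≤ (1/2) * (‖x‖ + ‖star x‖) := by
              gcongr
              · simp
              · exact norm_sub_le _ _
          _ = ‖x‖ := by rw [norm_star]; ring
    have hbound : ∀ x : A, ‖P x‖ ≤ (6 * ‖P 1‖) * ‖x‖ := by
      intro x
      obtain ⟨a, b, haa, hbb, hx, hna, hnb⟩ := hdecomp x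
      calc ‖P x‖ = ‖P a + Complex.I • P b‖ := by rw [hx, map_add, map_smul]
        _ ≤ ‖P a‖ + ‖Complex.I • P b‖ := norm_add_le _ _
        _ = ‖P a‖ + ‖P b‖ := by rw [norm_smul]; simp
        _ ≤ 3 * ‖P 1‖ * ‖a‖ + 3 * ‖P 1‖ * ‖b‖ := add_le_add (hbound_sa a haa) (hbound_sa b hbb)
        _ ≤ 3 * ‖P 1‖ * ‖x‖ + 3 * ‖P 1‖ * ‖x‖ := by gcongr <;> positivity
        _ = (6 * ‖P 1‖) * ‖x‖ := by ring
    have hcont : Continuous P := AddMonoidHomClass.continuous_of_bound P _ hbound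
    exact isClosed_eq hcont continuous_id
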